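/- An element (α, g) of H belongs to the center of H if and only if g = 1 and α is constant on edges with the same label, i.e., α(h, a) = α(k, a) for all h, k ∈ G and all a ∈ A. -/

import Mathlib

open Multiplicative

section CayAux

variable {G : Type*} [Group G] [DecidableEq G] {p : ℕ}

/-- Telescoping along the orbit of `1` under `u`. -/
lemma cay_tel (f : G → ZMod p) (u gg : G)
    (hf : ∀ h, f (u * h) = f h + (if h = gg then 1 else 0) - (if h = 1 then 1 else 0))
    (hg : gg ≠ 1) :
    ∀ m : ℕ, 1 ≤ m → (∀ j, 1 ≤ j → j < m → u ^ j ≠ gg ∧ u ^ j ≠ 1) →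
      f (u ^ m) = f 1 - 1 := by
  intro m
  induction m with
  | zero => intro h; omega
  | succ n ih =>
    intro _ hne
    rcases Nat.eq_zero_or_pos n with h0 | hn
    · subst h0
      rw [pow_one, ← mul_one u, hf 1, if_neg (Ne.symm hg), if_pos rfl]
      ring
    · have hne' : ∀ j, 1 ≤ j → j < n → u ^ j ≠ gg ∧ u ^ j ≠ 1 := fun j hj hj' =>
        hne j hj (by omega)
      have hin := ih hn hne'
      have h2 := hne n hn (by omega)
      rw [pow_succ', hf (u ^ n), hin, if_neg h2.1, if_neg h2.2]
      ring

lemma cay_exists_pow [Fintype G] (hp : p.Prime) (f : G → ZMod p) (u gg : G)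
    (hf : ∀ h, f (u * h) = f h + (if h = gg then 1 else 0) - (if h = 1 then 1 else 0))
    (hg : gg ≠ 1) : ∃ j : ℕ, u ^ (j + 1) = gg := by
  haveI : Fact p.Prime := ⟨hp⟩
  by_contra hc
  push_neg at hc
  have hne : ∀ j, 1 ≤ j → j < orderOf u → u ^ j ≠ gg ∧ u ^ j ≠ 1 := by
    intro j hj hj'
    refine ⟨?_, pow_ne_one_of_lt_orderOf (by omega) hj'⟩
    have := hc (j - 1)
    rwa [Nat.sub_add_cancel hj] at this
  have h1 : 1 ≤ orderOf u := (orderOf_pos u)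
  have := cay_tel f u gg hf hg (orderOf u) h1 hne
  rw [pow_orderOf_eq_one] at this
  have h10 : (1 : ZMod p) = 0 := by linear_combination this
  exact one_ne_zero h10

omit [DecidableEq G] in
lemma cay_inv_pow (f : G → ZMod p) (u : G) (hf : ∀ h, f (u * h) = f h) :
    ∀ (n : ℕ) (h : G), f (u ^ n * h) = f h := by
  intro n
  induction n with
  | zero => simp
  | succ k ih => intro h; rw [pow_succ', mul_assoc, hf, ih]

/-- main combinatorial step: `g = 1`. -/
lemma cay_g_eq_one [Fintype G] (hp : p.Prime) (fa fb : G → ZMod p) (ta tb gg : G)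
    (hia : ∀ h, fa (ta⁻¹ * h) = fa h + (if h = gg then 1 else 0) - (if h = 1 then 1 else 0))
    (hib : ∀ h, fb (tb⁻¹ * h) = fb h + (if h = gg then 1 else 0) - (if h = 1 then 1 else 0))
    (hinv : ∀ h, fb (ta⁻¹ * h) = fb h) :
    gg = 1 := by
  haveI : Fact p.Prime := ⟨hp⟩
  by_contra hg
  obtain ⟨j, hj⟩ := cay_exists_pow hp fa ta⁻¹ gg hia hg
  have hfb_g : fb gg = fb 1 := by
    have := cay_inv_pow fb ta⁻¹ hinv (j + 1) 1
    rwa [mul_one, hj] at this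
  obtain ⟨j0, hj0⟩ := cay_exists_pow hp fb tb⁻¹ gg hib hg
  have hex : ∃ k, tb⁻¹ ^ (k + 1) = gg := ⟨j0, hj0⟩
  classical
  set k0 := Nat.find hex with hk0
  have hk : tb⁻¹ ^ (k0 + 1) = gg := Nat.find_spec hex
  have hmin : ∀ i < k0, tb⁻¹ ^ (i + 1) ≠ gg := fun i hi => Nat.find_min hex hi
  have hne : ∀ j, 1 ≤ j → j < k0 + 1 → tb⁻¹ ^ j ≠ gg ∧ tb⁻¹ ^ j ≠ 1 := by
    intro j hj hj'
    constructor
    · have := hmin (j - 1) (by omega)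
      rwa [Nat.sub_add_cancel hj] at this
    · intro h1
      have h2 : tb⁻¹ ^ (k0 + 1 - j) = gg := by
        have h3 : tb⁻¹ ^ (k0 + 1) = tb⁻¹ ^ (k0 + 1 - j) * tb⁻¹ ^ j := by
          rw [← pow_add]; congr 1; omega
        rw [h3, h1, mul_one] at hk; exact hk
      have := hmin (k0 + 1 - j - 1) (by omega)
      rw [Nat.sub_add_cancel (by omega)] at this
      exact this h2
  have := cay_tel fb tb⁻¹ gg hib hg (k0 + 1) (by omega) hne
  rw [hk, hfb_g] at this
  have h10 : (1 : ZMod p) = 0 := by linear_combination this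
  exact one_ne_zero h10

omit [DecidableEq G] in
/-- The stabilizer of a function under left translation. -/
def cayStab (f : G → ZMod p) : Subgroup G where
  carrier := {x | ∀ h, f (x * h) = f h}
  one_mem' := by intro h; simp
  mul_mem' := by
    intro x y hx hy h
    rw [mul_assoc, hx (y * h), hy h]
  inv_mem' := by
    intro x hx h
    have := hx (x⁻¹ * h)
    rw [mul_inv_cancel_left] at this; exact this.symm

end CayAux

/- definitions cayAct/cayHom/cayGen/gaschutzH as pinned -/

/-- The shift action of `g : G` on functions `(G × A) → R`:
`(g · α)(h, a) = α (g⁻¹h, a)`. -/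
def cayAct {G A : Type*} (R : Type*) [Group G] [AddCommGroup R] (g : G) :
    ((G × A) → R) ≃+ ((G × A) → R) where
  toFun α := fun x => α (g⁻¹ * x.1, x.2)
  invFun α := fun x => α (g * x.1, x.2)
  left_inv := by intro α; funext x; simp
  right_inv := by intro α; funext x; simp
  map_add' := by intro α β; rfl

/-- The action of `G` on the (multiplicatively written) additive group `M` of
functions `(G × A) → R`, as a homomorphism into the automorphism group; it is
used to form the semidirect product `M ⋊ G`. -/
def cayHom (G A R : Type*) [Group G] [AddCommGroup R] :
    G →* MulAut (Multiplicative ((G × A) → R)) where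
  toFun g := AddEquiv.toMultiplicative (cayAct R g)
  map_one' := by
    apply MulEquiv.ext
    intro α
    apply Multiplicative.toAdd.injective
    funext x
    simp [cayAct, AddEquiv.toMultiplicative]
  map_mul' := by
    intro g h
    apply MulEquiv.ext
    intro α
    apply Multiplicative.toAdd.injective
    funext x
    simp [cayAct, AddEquiv.toMultiplicative, mul_assoc]

/-- The generator `(δ_{(1,a)}, φ a)` of `M ⋊ G`. -/
def cayGen {G A : Type*} (R : Type*) [Group G] [AddCommGroup R] [One R]
    [DecidableEq G] [DecidableEq A] (φ : A → G) (a : A) :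
    Multiplicative ((G × A) → R) ⋊[cayHom G A R] G :=
  ⟨ofAdd (fun x => if x = ((1 : G), a) then (1 : R) else 0), φ a⟩

/-- The model `H` of the universal Gaschütz `p`-extension `G^{ℤ/p}`: the subgroup
of `M ⋊ G` generated by the elements `(δ_{(1,a)}, φ a)` for `a ∈ A`. -/
def gaschutzH (G A : Type*) [Group G] [DecidableEq G] [DecidableEq A]
    (p : ℕ) (φ : A → G) :
    Subgroup (Multiplicative ((G × A) → ZMod p) ⋊[cayHom G A (ZMod p)] G) :=
  Subgroup.closure (Set.range (cayGen (ZMod p) φ))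

/-- An element `(α, g)` of `H = G^{ℤ/p}` is central in `H` iff
`g = 1` and `α` is constant on edges with the same label. -/

theorem center_of_gaschutz_extension
    {G A : Type*} [Group G] [Fintype G] [Fintype A] [DecidableEq G] [DecidableEq A]
    (hA : 2 ≤ Fintype.card A)
    (p : ℕ) (hp : p.Prime)
    (φ : A → G) (hgen : Subgroup.closure (Set.range φ) = ⊤)
    (α : (G × A) → ZMod p) (g : G)
    (hmem : (⟨ofAdd α, g⟩ :
        Multiplicative ((G × A) → ZMod p) ⋊[cayHom G A (ZMod p)] G) ∈ gaschutzH G A p φ) :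
    (⟨⟨ofAdd α, g⟩, hmem⟩ : gaschutzH G A p φ) ∈ Subgroup.center (gaschutzH G A p φ) ↔
      (g = 1 ∧ ∀ (h k : G) (a : A), α (h, a) = α (k, a)) := by
  haveI : Fact p.Prime := ⟨hp⟩
  constructor
  · intro hcent
    have key : ∀ (a : A) (h : G) (c : A),
        (if h = 1 ∧ c = a then (1 : ZMod p) else 0) + α ((φ a)⁻¹ * h, c)
          = α (h, c) + (if h = g ∧ c = a then 1 else 0) := by
      intro a h c
      have hga : cayGen (ZMod p) φ a ∈ gaschutzH G A p φ := Subgroup.subset_closure ⟨a, rfl⟩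
      have hcomm := Subgroup.mem_center_iff.mp hcent ⟨cayGen (ZMod p) φ a, hga⟩
      have hval : cayGen (ZMod p) φ a * ⟨ofAdd α, g⟩ = ⟨ofAdd α, g⟩ * cayGen (ZMod p) φ a :=
        congrArg Subtype.val hcomm
      have hleft := congrArg SemidirectProduct.left hval
      simp only [SemidirectProduct.mul_left, cayGen] at hleft
      have hpt := congrFun (congrArg Multiplicative.toAdd hleft) (h, c)
      have hcond : (g⁻¹ * h = 1) = (h = g) := by
        simp [inv_mul_eq_one, eq_comm]
      simp [cayHom, cayAct, AddEquiv.toMultiplicative, Prod.ext_iff, hcond] at hpt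
      exact hpt
    have hdiag : ∀ (a : A) (h : G), α ((φ a)⁻¹ * h, a)
        = α (h, a) + (if h = g then 1 else 0) - (if h = 1 then 1 else 0) := by
      intro a h
      have := key a h a
      simp only [and_true] at this
      linear_combination this
    have hoff : ∀ (a c : A), c ≠ a → ∀ h : G, α ((φ a)⁻¹ * h, c) = α (h, c) := by
      intro a c hca h
      have := key a h c
      simp only [hca, and_false, if_false, add_zero, zero_add] at this
      exact this
    obtain ⟨a, b, hab⟩ := Fintype.exists_pair_of_one_lt_card (α := A) (by omega)
    have hg1 : g = 1 :=
      cay_g_eq_one hp (fun h => α (h, a)) (fun h => α (h, b)) (φ a) (φ b) g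
        (hdiag a) (hdiag b) (hoff a b (Ne.symm hab))
    subst hg1
    refine ⟨rfl, ?_⟩
    intro h k c
    have hinvall : ∀ (a : A) (h : G), α ((φ a)⁻¹ * h, c) = α (h, c) := by
      intro a h
      by_cases hc : c = a
      · rw [hc, hdiag a h]; ring
      · exact hoff a c hc h
    have hstab : ∀ x : G, ∀ h : G, α (x * h, c) = α (h, c) := by
      have hle : Subgroup.closure (Set.range φ) ≤ cayStab (p := p) (fun h => α (h, c)) := by
        rw [Subgroup.closure_le]
        rintro x ⟨a, rfl⟩
        have hinv : (φ a)⁻¹ ∈ cayStab (p := p) (fun h => α (h, c)) := hinvall a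
        simpa using (cayStab (p := p) (fun h => α (h, c))).inv_mem hinv
      rw [hgen] at hle
      exact fun x => hle (Subgroup.mem_top x)
    have := hstab (h * k⁻¹) k
    rwa [inv_mul_cancel_right] at this
  · rintro ⟨hg1, hc⟩
    subst hg1
    rw [Subgroup.mem_center_iff]
    intro y
    apply Subtype.ext
    rw [Subgroup.coe_mul, Subgroup.coe_mul]
    have hz : ∀ w : Multiplicative ((G × A) → ZMod p) ⋊[cayHom G A (ZMod p)] G,
        w * ⟨ofAdd α, 1⟩ = ⟨ofAdd α, 1⟩ * w := by
      intro w
      have hfix : (cayHom G A (ZMod p)) w.right (ofAdd α) = ofAdd α := by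
        apply Multiplicative.toAdd.injective
        funext x
        simp only [cayHom, cayAct, AddEquiv.toMultiplicative, MonoidHom.coe_mk, OneHom.coe_mk,
          MulEquiv.coe_mk, Equiv.coe_fn_mk, toAdd_ofAdd]
        exact hc _ _ x.2
      ext
      · simp only [SemidirectProduct.mul_left, map_one, MulAut.one_apply, hfix]
        rw [mul_comm]
      · simp [SemidirectProduct.mul_right]
    exact hz y.val
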